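/- Let k ∈ (−2,2) and let (x₀,y₀,z₀) ∈ E_k. If the Γ-orbit {g(x₀,y₀,z₀) : g ∈ Γ} is an infinite set, then it is dense in E_k: every point of E_k is in its closure. -/

import Mathlib

/-- `κ(x,y,z) = x² + y² + z² − xyz − 2`. -/
def kappa (p : ℝ × ℝ × ℝ) : ℝ :=
  p.1 ^ 2 + p.2.1 ^ 2 + p.2.2 ^ 2 - p.1 * p.2.1 * p.2.2 - 2

/-- The level set `E_k = {(x,y,z) ∈ [−2,2]³ : κ(x,y,z) = k}`. -/
def Ek (k : ℝ) : Set (ℝ × ℝ × ℝ) :=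
  {p | p.1 ∈ Set.Icc (-2 : ℝ) 2 ∧ p.2.1 ∈ Set.Icc (-2 : ℝ) 2 ∧ p.2.2 ∈ Set.Icc (-2 : ℝ) 2 ∧
    kappa p = k}

/-- The Dehn twist `τ_X(x,y,z) = (x, z, xz − y)`, as a bijection of `ℝ³`. -/
def tauX : Equiv.Perm (ℝ × ℝ × ℝ) where
  toFun p := (p.1, p.2.2, p.1 * p.2.2 - p.2.1)
  invFun p := (p.1, p.1 * p.2.1 - p.2.2, p.2.1)
  left_inv := by rintro ⟨x, y, z⟩; exact Prod.ext rfl (Prod.ext (by dsimp; ring) rfl)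
  right_inv := by rintro ⟨x, y, z⟩; exact Prod.ext rfl (Prod.ext rfl (by dsimp; ring))

/-- The Dehn twist `τ_Y(x,y,z) = (z, y, yz − x)`, as a bijection of `ℝ³`. -/
def tauY : Equiv.Perm (ℝ × ℝ × ℝ) where
  toFun p := (p.2.2, p.2.1, p.2.1 * p.2.2 - p.1)
  invFun p := (p.1 * p.2.1 - p.2.2, p.2.1, p.1)
  left_inv := by rintro ⟨x, y, z⟩; exact Prod.ext (by dsimp; ring) (Prod.ext rfl rfl)
  right_inv := by rintro ⟨x, y, z⟩; exact Prod.ext rfl (Prod.ext rfl (by dsimp; ring))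

/-- `Γ`: the group of bijections of `ℝ³` generated by `τ_X` and `τ_Y`. -/
def Gamma : Subgroup (Equiv.Perm (ℝ × ℝ × ℝ)) := Subgroup.closure {tauX, tauY}

/-- The `Γ`-orbit of a point of `ℝ³`. -/
def gammaOrbit (p : ℝ × ℝ × ℝ) : Set (ℝ × ℝ × ℝ) := {q | ∃ g ∈ Gamma, g p = q}

-- basic application lemmas
lemma tauX_apply (p : ℝ × ℝ × ℝ) : tauX p = (p.1, p.2.2, p.1 * p.2.2 - p.2.1) := rfl
lemma tauX_inv_apply (p : ℝ × ℝ × ℝ) : tauX⁻¹ p = (p.1, p.1 * p.2.1 - p.2.2, p.2.1) := rfl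
lemma tauY_apply (p : ℝ × ℝ × ℝ) : tauY p = (p.2.2, p.2.1, p.2.1 * p.2.2 - p.1) := rfl
lemma tauY_inv_apply (p : ℝ × ℝ × ℝ) : tauY⁻¹ p = (p.1 * p.2.1 - p.2.2, p.2.1, p.1) := rfl

lemma mem_Ek_iff {k : ℝ} {x y z : ℝ} :
    (x, y, z) ∈ Ek k ↔ (-2 ≤ x ∧ x ≤ 2) ∧ (-2 ≤ y ∧ y ≤ 2) ∧ (-2 ≤ z ∧ z ≤ 2) ∧
      x^2 + y^2 + z^2 - x*y*z - 2 = k := by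
  simp [Ek, Set.mem_Icc, kappa]

lemma Ek_sq_le_fst {k : ℝ} {p : ℝ × ℝ × ℝ} (hp : p ∈ Ek k) : p.1 ^ 2 ≤ k + 2 := by
  obtain ⟨x, y, z⟩ := p
  rw [mem_Ek_iff] at hp
  obtain ⟨hx, hy, hz, hκ⟩ := hp
  show x ^ 2 ≤ k + 2
  nlinarith [sq_nonneg (2*z - x*y), mul_nonneg (by nlinarith [hx.1, hx.2] : (0:ℝ) ≤ 4 - x^2) (sq_nonneg y)]

lemma Ek_sq_le_snd {k : ℝ} {p : ℝ × ℝ × ℝ} (hp : p ∈ Ek k) : p.2.1 ^ 2 ≤ k + 2 := by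
  obtain ⟨x, y, z⟩ := p
  rw [mem_Ek_iff] at hp
  obtain ⟨hx, hy, hz, hκ⟩ := hp
  show y ^ 2 ≤ k + 2
  nlinarith [sq_nonneg (2*z - x*y), mul_nonneg (by nlinarith [hy.1, hy.2] : (0:ℝ) ≤ 4 - y^2) (sq_nonneg x)]

lemma root_bound {k x z w : ℝ} (hk : k < 2) (hx : x^2 ≤ 4) (hz : z^2 ≤ 4)
    (h : w^2 - x*z*w + (x^2 + z^2 - 2 - k) = 0) : -2 ≤ w ∧ w ≤ 2 := by
  constructor
  · by_contra hw
    push_neg at hw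
    nlinarith [sq_nonneg (x+z), sq_nonneg (x-z)]
  · by_contra hw
    push_neg at hw
    nlinarith [sq_nonneg (x-z), sq_nonneg (x+z)]

lemma tauX_mem_Ek {k : ℝ} (hk : k < 2) {p : ℝ × ℝ × ℝ} (hp : p ∈ Ek k) : tauX p ∈ Ek k := by
  obtain ⟨x, y, z⟩ := p
  rw [mem_Ek_iff] at hp
  obtain ⟨hx, hy, hz, hκ⟩ := hp
  rw [tauX_apply, mem_Ek_iff]
  have hb := root_bound hk (by nlinarith [hx.1, hx.2] : x^2 ≤ 4)
    (by nlinarith [hz.1, hz.2] : z^2 ≤ 4)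
    (by linear_combination hκ : (x*z-y)^2 - x*z*(x*z-y) + (x^2 + z^2 - 2 - k) = 0)
  exact ⟨hx, hz, hb, by linear_combination hκ⟩

lemma tauX_inv_mem_Ek {k : ℝ} (hk : k < 2) {p : ℝ × ℝ × ℝ} (hp : p ∈ Ek k) : tauX⁻¹ p ∈ Ek k := by
  obtain ⟨x, y, z⟩ := p
  rw [mem_Ek_iff] at hp
  obtain ⟨hx, hy, hz, hκ⟩ := hp
  rw [tauX_inv_apply, mem_Ek_iff]
  have hb := root_bound hk (by nlinarith [hx.1, hx.2] : x^2 ≤ 4)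
    (by nlinarith [hy.1, hy.2] : y^2 ≤ 4)
    (by linear_combination hκ : (x*y-z)^2 - x*y*(x*y-z) + (x^2 + y^2 - 2 - k) = 0)
  exact ⟨hx, hb, hy, by linear_combination hκ⟩

lemma tauY_mem_Ek {k : ℝ} (hk : k < 2) {p : ℝ × ℝ × ℝ} (hp : p ∈ Ek k) : tauY p ∈ Ek k := by
  obtain ⟨x, y, z⟩ := p
  rw [mem_Ek_iff] at hp
  obtain ⟨hx, hy, hz, hκ⟩ := hp
  rw [tauY_apply, mem_Ek_iff]
  have hb := root_bound hk (by nlinarith [hy.1, hy.2] : y^2 ≤ 4)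
    (by nlinarith [hz.1, hz.2] : z^2 ≤ 4)
    (by linear_combination hκ : (y*z-x)^2 - y*z*(y*z-x) + (y^2 + z^2 - 2 - k) = 0)
  exact ⟨hz, hy, hb, by linear_combination hκ⟩

lemma tauY_inv_mem_Ek {k : ℝ} (hk : k < 2) {p : ℝ × ℝ × ℝ} (hp : p ∈ Ek k) : tauY⁻¹ p ∈ Ek k := by
  obtain ⟨x, y, z⟩ := p
  rw [mem_Ek_iff] at hp
  obtain ⟨hx, hy, hz, hκ⟩ := hp
  rw [tauY_inv_apply, mem_Ek_iff]
  have hb := root_bound hk (by nlinarith [hx.1, hx.2] : x^2 ≤ 4)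
    (by nlinarith [hy.1, hy.2] : y^2 ≤ 4)
    (by linear_combination hκ : (x*y-z)^2 - x*y*(x*y-z) + (x^2 + y^2 - 2 - k) = 0)
  exact ⟨hb, hy, hx, by linear_combination hκ⟩

lemma continuous_tauX : Continuous ⇑tauX := by
  show Continuous fun p : ℝ × ℝ × ℝ => (p.1, p.2.2, p.1 * p.2.2 - p.2.1)
  fun_prop

lemma continuous_tauX_inv : Continuous ⇑tauX⁻¹ := by
  show Continuous fun p : ℝ × ℝ × ℝ => (p.1, p.1 * p.2.1 - p.2.2, p.2.1)
  fun_prop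

lemma continuous_tauY : Continuous ⇑tauY := by
  show Continuous fun p : ℝ × ℝ × ℝ => (p.2.2, p.2.1, p.2.1 * p.2.2 - p.1)
  fun_prop

lemma continuous_tauY_inv : Continuous ⇑tauY⁻¹ := by
  show Continuous fun p : ℝ × ℝ × ℝ => (p.1 * p.2.1 - p.2.2, p.2.1, p.1)
  fun_prop

lemma gamma_continuous {g : Equiv.Perm (ℝ × ℝ × ℝ)} (hg : g ∈ Gamma) :
    Continuous ⇑g ∧ Continuous ⇑g⁻¹ := by
  induction hg using Subgroup.closure_induction with
  | mem x hx =>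
    rcases hx with h | h
    · subst h; exact ⟨continuous_tauX, continuous_tauX_inv⟩
    · simp only [Set.mem_singleton_iff] at h; subst h
      exact ⟨continuous_tauY, continuous_tauY_inv⟩
  | one => exact ⟨by simpa using continuous_id, by simpa using continuous_id⟩
  | mul x y hx hy ihx ihy =>
    refine ⟨?_, ?_⟩
    · show Continuous fun p => (x * y) p
      simp only [Equiv.Perm.mul_apply]
      exact ihx.1.comp ihy.1
    · show Continuous fun p => (x * y)⁻¹ p
      simp only [mul_inv_rev, Equiv.Perm.mul_apply]
      exact ihy.2.comp ihx.2
  | inv x hx ihx => exact ⟨ihx.2, by simpa using ihx.1⟩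

lemma gamma_maps {k : ℝ} (hk : k < 2) {g : Equiv.Perm (ℝ × ℝ × ℝ)} (hg : g ∈ Gamma) :
    (∀ p ∈ Ek k, g p ∈ Ek k) ∧ (∀ p ∈ Ek k, g⁻¹ p ∈ Ek k) := by
  induction hg using Subgroup.closure_induction with
  | mem x hx =>
    rcases hx with h | h
    · subst h; exact ⟨fun p hp => tauX_mem_Ek hk hp, fun p hp => tauX_inv_mem_Ek hk hp⟩
    · simp only [Set.mem_singleton_iff] at h; subst h
      exact ⟨fun p hp => tauY_mem_Ek hk hp, fun p hp => tauY_inv_mem_Ek hk hp⟩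
  | one => constructor <;> (intro p hp; simpa using hp)
  | mul x y hx hy ihx ihy =>
    constructor
    · intro p hp
      rw [Equiv.Perm.mul_apply]
      exact ihx.1 _ (ihy.1 _ hp)
    · intro p hp
      rw [mul_inv_rev, Equiv.Perm.mul_apply]
      exact ihy.2 _ (ihx.2 _ hp)
  | inv x hx ihx => exact ⟨ihx.2, by simpa using ihx.1⟩

lemma gammaOrbit_subset_Ek {k : ℝ} (hk : k < 2) {p₀ : ℝ × ℝ × ℝ} (hp₀ : p₀ ∈ Ek k) :
    gammaOrbit p₀ ⊆ Ek k := by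
  rintro q ⟨g, hg, rfl⟩
  exact (gamma_maps hk hg).1 _ hp₀

lemma smul_mem_gammaOrbit {p₀ q : ℝ × ℝ × ℝ} {g : Equiv.Perm (ℝ × ℝ × ℝ)} (hg : g ∈ Gamma)
    (hq : q ∈ gammaOrbit p₀) : g q ∈ gammaOrbit p₀ := by
  obtain ⟨h, hh, rfl⟩ := hq
  exact ⟨g * h, mul_mem hg hh, rfl⟩

lemma smul_mem_orbit_closure {p₀ q : ℝ × ℝ × ℝ} {g : Equiv.Perm (ℝ × ℝ × ℝ)} (hg : g ∈ Gamma)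
    (hq : q ∈ closure (gammaOrbit p₀)) : g q ∈ closure (gammaOrbit p₀) :=
  map_mem_closure (gamma_continuous hg).1 hq (fun _ hb => smul_mem_gammaOrbit hg hb)

lemma isClosed_Ek {k : ℝ} : IsClosed (Ek k) := by
  have : Ek k = (Set.Icc (-2:ℝ) 2 ×ˢ (Set.Icc (-2:ℝ) 2 ×ˢ Set.Icc (-2:ℝ) 2)) ∩ kappa ⁻¹' {k} := by
    ext ⟨x, y, z⟩
    simp only [Ek, Set.mem_setOf_eq, Set.mem_inter_iff, Set.mem_prod, Set.mem_preimage,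
      Set.mem_singleton_iff]
    tauto
  rw [this]
  refine IsClosed.inter ((isClosed_Icc).prod ((isClosed_Icc).prod isClosed_Icc)) ?_
  exact IsClosed.preimage (by unfold kappa; fun_prop) isClosed_singleton

lemma isCompact_Ek {k : ℝ} : IsCompact (Ek k) := by
  refine IsCompact.of_isClosed_subset
    ((isCompact_Icc (a := (-2:ℝ)) (b := 2)).prod
      ((isCompact_Icc (a := (-2:ℝ)) (b := 2)).prod (isCompact_Icc (a := (-2:ℝ)) (b := 2))))
    isClosed_Ek ?_
  rintro ⟨x, y, z⟩ hp
  rw [mem_Ek_iff] at hp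
  exact ⟨Set.mem_Icc.2 hp.1, Set.mem_Icc.2 hp.2.1, Set.mem_Icc.2 hp.2.2.1⟩


open Real


noncomputable def sn (a : ℝ) : ℝ := Real.sqrt (1 - (a/2)^2)
noncomputable def rad (k a : ℝ) : ℝ := Real.sqrt (k + 2 - a^2) / sn a
noncomputable def phi (k a t : ℝ) : ℝ × ℝ × ℝ :=
  (a, rad k a * Real.cos t, rad k a * Real.cos (t - Real.arccos (a/2)))

lemma sn_nonneg (a : ℝ) : 0 ≤ sn a := Real.sqrt_nonneg _
lemma sn_pos {a : ℝ} (ha : a^2 < 4) : 0 < sn a := by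
  apply Real.sqrt_pos.2; nlinarith
lemma sn_sq {a : ℝ} (ha : a^2 ≤ 4) : sn a ^ 2 = 1 - (a/2)^2 := by
  apply Real.sq_sqrt; nlinarith
lemma sin_arccos_half (a : ℝ) : Real.sin (Real.arccos (a/2)) = sn a := by
  rw [Real.sin_arccos]; rfl
lemma cos_arccos_half {a : ℝ} (ha : a^2 ≤ 4) : Real.cos (Real.arccos (a/2)) = a/2 := by
  apply Real.cos_arccos <;> nlinarith

lemma rad_nonneg (k a : ℝ) : 0 ≤ rad k a := div_nonneg (Real.sqrt_nonneg _) (sn_nonneg a)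

lemma rad_sq {k a : ℝ} (hm : 0 ≤ k + 2 - a^2) (ha : a^2 < 4) :
    rad k a ^ 2 * sn a ^ 2 = k + 2 - a^2 := by
  have h1 : sn a ≠ 0 := ne_of_gt (sn_pos ha)
  rw [rad, div_pow, div_mul_cancel₀ _ (pow_ne_zero 2 h1)]
  exact Real.sq_sqrt hm

lemma rad_le_two {k a : ℝ} (hk : k < 2) (hm : 0 ≤ k + 2 - a^2) (ha : a^2 < 4) :
    rad k a ≤ 2 := by
  have h1 := sn_pos ha
  have h2 := rad_sq hm ha
  have h3 := sn_sq ha.le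
  have h4 : 0 < 1 - (a/2)^2 := by nlinarith [pow_pos h1 2]
  have h5 : rad k a ^ 2 ≤ 4 := by
    by_contra h5
    push_neg at h5
    have := (mul_lt_mul_of_pos_right h5 h4)
    nlinarith
  nlinarith [rad_nonneg k a]

lemma phi_mem {k a : ℝ} (hk₁ : -2 < k) (hk₂ : k < 2) (ha : a^2 ≤ k + 2) (t : ℝ) :
    phi k a t ∈ Ek k := by
  have ha4 : a^2 < 4 := by nlinarith
  have hm : 0 ≤ k + 2 - a^2 := by linarith
  have hρ2 := rad_le_two hk₂ hm ha4
  have hρ0 := rad_nonneg k a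
  have h3 := sn_sq ha4.le
  have hsq := rad_sq hm ha4
  rw [phi, mem_Ek_iff]
  set α := Real.arccos (a/2) with hα
  have hcos : Real.cos (t - α) = Real.cos t * (a/2) + Real.sin t * sn a := by
    rw [Real.cos_sub, cos_arccos_half ha4.le, sin_arccos_half]
  have hb1 : -2 ≤ a ∧ a ≤ 2 := by constructor <;> nlinarith
  have hbc : ∀ u : ℝ, -2 ≤ rad k a * Real.cos u ∧ rad k a * Real.cos u ≤ 2 := by
    intro u
    have := Real.neg_one_le_cos u
    have := Real.cos_le_one u
    constructor <;> nlinarith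
  refine ⟨hb1, hbc t, hbc _, ?_⟩
  have hpy : Real.sin t ^ 2 + Real.cos t ^ 2 = 1 := Real.sin_sq_add_cos_sq t
  rw [hcos]
  linear_combination (-(rad k a ^2 * Real.cos t ^2)) * h3 +
    (rad k a ^2 * sn a ^2) * hpy + hsq

lemma polar {u v ρ : ℝ} (hρ : 0 ≤ ρ) (h : u^2 + v^2 = ρ^2) :
    ∃ t, u = ρ * Real.cos t ∧ v = ρ * Real.sin t := by
  rcases eq_or_lt_of_le hρ with h0 | h0
  · have hu : u = 0 := by nlinarith [sq_nonneg u, sq_nonneg v]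
    have hv : v = 0 := by nlinarith [sq_nonneg u, sq_nonneg v]
    have hρ0 : ρ = 0 := h0.symm
    subst hρ0
    exact ⟨0, by rw [hu]; ring, by rw [hv]; ring⟩
  · set w : ℂ := ⟨u, v⟩ with hw
    have habs : ‖w‖ = ρ := by
      rw [Complex.norm_def, Complex.normSq_mk]
      rw [show u*u + v*v = ρ^2 by nlinarith]
      exact Real.sqrt_sq h0.le
    have hw0 : w ≠ 0 := by
      intro h'
      rw [h'] at habs
      simp at habs
      exact absurd habs.symm (ne_of_gt h0)
    refine ⟨Complex.arg w, ?_, ?_⟩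
    · rw [Complex.cos_arg hw0, habs]
      field_simp
      rfl
    · rw [Complex.sin_arg, habs]
      field_simp
      rfl

lemma phi_surj {k : ℝ} (hk₂ : k < 2) {p : ℝ × ℝ × ℝ} (hp : p ∈ Ek k) :
    ∃ t, p = phi k p.1 t := by
  obtain ⟨x, y, z⟩ := p
  have hx2 : x^2 ≤ k + 2 := Ek_sq_le_fst hp
  rw [mem_Ek_iff] at hp
  obtain ⟨hx, hy, hz, hκ⟩ := hp
  have ha4 : x^2 < 4 := by nlinarith
  have hs := sn_pos ha4
  have hs2 := sn_sq ha4.le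
  have hm : 0 ≤ k + 2 - x^2 := by linarith
  have hsq := rad_sq hm ha4
  set u := y with hu
  set v := (z - y * (x/2)) / sn x with hv
  have huv : u^2 + v^2 = rad k x ^ 2 := by
    have : v * sn x = z - y * (x/2) := by
      rw [hv]; field_simp
    have h2 : v^2 * sn x ^2 = (z - y*(x/2))^2 := by
      rw [← this]; ring
    have h4 : sn x ^ 2 ≠ 0 := by positivity
    have h5 : (u^2 + v^2) * sn x ^2 = rad k x ^2 * sn x ^2 := by
      rw [hsq]
      have expand : (u^2 + v^2) * sn x ^2 = u^2 * sn x^2 + (z - y*(x/2))^2 := by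
        rw [← h2]; ring
      rw [expand, hu, hs2]
      linear_combination hκ
    exact mul_right_cancel₀ h4 h5
  obtain ⟨t, ht1, ht2⟩ := polar (rad_nonneg k x) huv
  refine ⟨t, ?_⟩
  show (x, y, z) = (x, rad k x * Real.cos t, rad k x * Real.cos (t - Real.arccos (x/2)))
  have hcos : Real.cos (t - Real.arccos (x/2)) =
      Real.cos t * (x/2) + Real.sin t * sn x := by
    rw [Real.cos_sub, cos_arccos_half ha4.le, sin_arccos_half]
  have hz' : z = rad k x * Real.cos (t - Real.arccos (x/2)) := by
    rw [hcos]
    have hvz : v * sn x = z - y * (x/2) := by rw [hv]; field_simp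
    calc z = y * (x/2) + v * sn x := by rw [hvz]; ring
    _ = rad k x * (Real.cos t * (x/2) + Real.sin t * sn x) := by
        rw [hu] at ht1; rw [ht1, ht2]; ring
  exact Prod.ext rfl (Prod.ext (by rw [hu] at ht1; exact ht1) hz')

lemma tauX_phi {k a : ℝ} (ha : a^2 ≤ 4) (t : ℝ) :
    tauX (phi k a t) = phi k a (t - Real.arccos (a/2)) := by
  rw [phi, phi, tauX_apply]
  set α := Real.arccos (a/2) with hα
  have hc : Real.cos α = a/2 := cos_arccos_half ha
  have hs : Real.sin α = sn a := sin_arccos_half a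
  have hpy : Real.sin α ^2 + Real.cos α ^2 = 1 := Real.sin_sq_add_cos_sq α
  refine Prod.ext rfl (Prod.ext rfl ?_)
  show a * (rad k a * Real.cos (t - α)) - rad k a * Real.cos t
      = rad k a * Real.cos (t - α - α)
  rw [show t - α - α = (t - α) - α by ring, Real.cos_sub (t-α), Real.cos_sub t]
  rw [Real.sin_sub t]
  linear_combination (rad k a * Real.cos t) * hpy +
    (-2*rad k a*(Real.cos t * Real.cos α + Real.sin t * Real.sin α)) * hc

lemma tauX_inv_phi {k a : ℝ} (ha : a^2 ≤ 4) (t : ℝ) :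
    tauX⁻¹ (phi k a t) = phi k a (t + Real.arccos (a/2)) := by
  rw [phi, phi, tauX_inv_apply]
  set α := Real.arccos (a/2) with hα
  have hc : Real.cos α = a/2 := cos_arccos_half ha
  refine Prod.ext rfl (Prod.ext ?_ ?_)
  · show a * (rad k a * Real.cos t) - rad k a * Real.cos (t - α)
      = rad k a * Real.cos (t + α)
    rw [Real.cos_sub, Real.cos_add, hc]
    ring
  · show rad k a * Real.cos t = rad k a * Real.cos (t + α - α)
    rw [show t + α - α = t by ring]

lemma tauX_zpow_phi {k a : ℝ} (ha : a^2 ≤ 4) (j : ℤ) :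
    ∀ t, (tauX ^ j) (phi k a t) = phi k a (t - j * Real.arccos (a/2)) := by
  induction j using Int.induction_on with
  | zero => simp
  | succ n ih =>
    intro t
    rw [zpow_add_one, Equiv.Perm.mul_apply, tauX_phi ha, ih]
    congr 1
    push_cast
    ring
  | pred n ih =>
    intro t
    rw [zpow_sub_one, Equiv.Perm.mul_apply, tauX_inv_phi ha, ih]
    congr 1
    push_cast
    ring

lemma phi_period (k a t : ℝ) (m : ℤ) : phi k a (t + m * (2 * π)) = phi k a t := by
  rw [phi, phi]
  rw [Real.cos_add_int_mul_two_pi]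
  rw [show t + m * (2*π) - Real.arccos (a/2) = t - Real.arccos (a/2) + m * (2*π) by ring]
  rw [Real.cos_add_int_mul_two_pi]

lemma phi_contAt {k a s : ℝ} (ha : a^2 < 4) :
    ContinuousAt (fun w : ℝ × ℝ => phi k w.1 w.2) (a, s) := by
  have hsn : ContinuousAt (fun w : ℝ × ℝ => sn w.1) (a, s) := by
    apply Real.continuous_sqrt.continuousAt.comp
    fun_prop
  have hsn0 : sn a ≠ 0 := ne_of_gt (sn_pos ha)
  have hrad : ContinuousAt (fun w : ℝ × ℝ => rad k w.1) (a, s) := by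
    apply ContinuousAt.div _ hsn _
    · apply Real.continuous_sqrt.continuousAt.comp
      fun_prop
    · exact hsn0
  have harc : ContinuousAt (fun w : ℝ × ℝ => Real.arccos (w.1/2)) (a, s) := by
    apply Real.continuous_arccos.continuousAt.comp
    fun_prop
  unfold phi
  apply ContinuousAt.prodMk (by fun_prop)
  apply ContinuousAt.prodMk
  · exact hrad.mul (Real.continuous_cos.continuousAt.comp (by fun_prop))
  · exact hrad.mul (Real.continuous_cos.continuousAt.comp ((continuousAt_snd).sub harc))

lemma exists_approx {θ : ℝ} (hirr : Irrational (θ / π)) (t₀ s ε : ℝ) (hε : 0 < ε) :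
    ∃ j m : ℤ, |t₀ + j * θ + m * (2 * π) - s| < ε := by
  set S : AddSubgroup ℝ :=
    { carrier := {x | ∃ j m : ℤ, x = j * θ + m * (2 * π)}
      add_mem' := by
        rintro x y ⟨j₁, m₁, rfl⟩ ⟨j₂, m₂, rfl⟩
        exact ⟨j₁ + j₂, m₁ + m₂, by push_cast; ring⟩
      zero_mem' := ⟨0, 0, by push_cast; ring⟩
      neg_mem' := by
        rintro x ⟨j, m, rfl⟩
        exact ⟨-j, -m, by push_cast; ring⟩ } with hS
  have hπ : (π : ℝ) ≠ 0 := Real.pi_ne_zero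
  rcases AddSubgroup.dense_or_cyclic S with hd | ⟨g, hg⟩
  · have := hd (s - t₀)
    rw [Metric.mem_closure_iff] at this
    obtain ⟨b, hb, hdist⟩ := this ε hε
    obtain ⟨j, m, rfl⟩ := hb
    refine ⟨j, m, ?_⟩
    rw [Real.dist_eq] at hdist
    rw [show t₀ + ↑j*θ + ↑m*(2*π) - s = -((s - t₀) - (↑j*θ + ↑m*(2*π))) by ring, abs_neg]
    exact hdist
  · exfalso
    have hθS : θ ∈ S := ⟨1, 0, by push_cast; ring⟩
    have h2πS : (2 * π) ∈ S := ⟨0, 1, by push_cast; ring⟩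
    rw [hg, AddSubgroup.mem_closure_singleton] at hθS h2πS
    obtain ⟨n, hn⟩ := hθS
    obtain ⟨m, hm⟩ := h2πS
    rw [zsmul_eq_mul] at hn hm
    have hg0 : g ≠ 0 := by
      intro h
      rw [h] at hm
      simp at hm
    have hm0 : (m : ℝ) ≠ 0 := by
      intro h
      rw [h] at hm
      simp at hm
    apply hirr
    refine ⟨(2 * n) / (m : ℚ), ?_⟩
    push_cast
    rw [div_eq_div_iff hm0 hπ]
    linear_combination (-(n:ℝ)) * hm + (m:ℝ) * hn

def swapXY (p : ℝ × ℝ × ℝ) : ℝ × ℝ × ℝ := (p.2.1, p.1, p.2.2)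

lemma swapXY_swapXY (p : ℝ × ℝ × ℝ) : swapXY (swapXY p) = p := rfl

lemma continuous_swapXY : Continuous swapXY := by unfold swapXY; fun_prop

lemma swapXY_mem_Ek {k : ℝ} {p : ℝ × ℝ × ℝ} (hp : p ∈ Ek k) : swapXY p ∈ Ek k := by
  obtain ⟨x, y, z⟩ := p
  rw [mem_Ek_iff] at hp
  obtain ⟨h1, h2, h3, h4⟩ := hp
  exact mem_Ek_iff.2 ⟨h2, h1, h3, by linear_combination h4⟩

lemma tauX_swapXY (p : ℝ × ℝ × ℝ) : tauX (swapXY p) = swapXY (tauY p) := rfl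
lemma tauX_inv_swapXY (p : ℝ × ℝ × ℝ) : tauX⁻¹ (swapXY p) = swapXY (tauY⁻¹ p) := by
  obtain ⟨x, y, z⟩ := p
  simp only [swapXY, tauY_inv_apply, tauX_inv_apply]
  exact Prod.ext rfl (Prod.ext (by ring) rfl)

lemma tauY_swapXY (p : ℝ × ℝ × ℝ) : tauY (swapXY p) = swapXY (tauX p) := rfl
lemma tauY_inv_swapXY (p : ℝ × ℝ × ℝ) : tauY⁻¹ (swapXY p) = swapXY (tauX⁻¹ p) := by
  obtain ⟨x, y, z⟩ := p
  simp only [swapXY, tauX_inv_apply, tauY_inv_apply]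
  exact Prod.ext (by ring) rfl

lemma tauX_zpow_swapXY (j : ℤ) (p : ℝ × ℝ × ℝ) :
    (tauX ^ j) (swapXY p) = swapXY ((tauY ^ j) p) := by
  induction j using Int.induction_on generalizing p with
  | zero => simp
  | succ n ih =>
    rw [zpow_add_one, zpow_add_one, Equiv.Perm.mul_apply, Equiv.Perm.mul_apply,
      tauX_swapXY, ih]
  | pred n ih =>
    rw [zpow_sub_one, zpow_sub_one, Equiv.Perm.mul_apply, Equiv.Perm.mul_apply,
      tauX_inv_swapXY, ih]

lemma tauY_zpow_swapXY (j : ℤ) (p : ℝ × ℝ × ℝ) :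
    (tauY ^ j) (swapXY p) = swapXY ((tauX ^ j) p) := by
  induction j using Int.induction_on generalizing p with
  | zero => simp
  | succ n ih =>
    rw [zpow_add_one, zpow_add_one, Equiv.Perm.mul_apply, Equiv.Perm.mul_apply,
      tauY_swapXY, ih]
  | pred n ih =>
    rw [zpow_sub_one, zpow_sub_one, Equiv.Perm.mul_apply, Equiv.Perm.mul_apply,
      tauY_inv_swapXY, ih]

lemma swapXY_image_mem {S : Set (ℝ × ℝ × ℝ)} {p : ℝ × ℝ × ℝ} :
    p ∈ swapXY '' S ↔ swapXY p ∈ S := by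
  constructor
  · rintro ⟨q, hq, rfl⟩
    rwa [swapXY_swapXY]
  · intro h
    exact ⟨swapXY p, h, swapXY_swapXY p⟩

lemma isClosed_swapXY_image {S : Set (ℝ × ℝ × ℝ)} (hS : IsClosed S) :
    IsClosed (swapXY '' S) := by
  have : swapXY '' S = swapXY ⁻¹' S := by
    ext p
    rw [swapXY_image_mem, Set.mem_preimage]
  rw [this]
  exact hS.preimage continuous_swapXY

section Circle

variable {k : ℝ} {K : Set (ℝ × ℝ × ℝ)}

lemma caseI_x (hk₂ : k < 2) (hKcl : IsClosed K) (hKE : K ⊆ Ek k)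
    (hX : ∀ (j : ℤ), ∀ q ∈ K, (tauX ^ j) q ∈ K)
    {q : ℝ × ℝ × ℝ} (hq : q ∈ K) (hirr : Irrational (Real.arccos (q.1 / 2) / π)) :
    ∀ p ∈ Ek k, p.1 = q.1 → p ∈ K := by
  intro p hp hp1
  set a := q.1 with ha
  set α := Real.arccos (a / 2) with hα
  have hqE := hKE hq
  have ha2 : a ^ 2 ≤ k + 2 := Ek_sq_le_fst hqE
  have ha4 : a ^ 2 < 4 := by nlinarith
  obtain ⟨t₀, ht₀⟩ := phi_surj hk₂ hqE
  obtain ⟨s, hs⟩ := phi_surj hk₂ hp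
  rw [hp1] at hs
  rw [← hKcl.closure_eq, Metric.mem_closure_iff]
  intro ε hε
  have hc : ContinuousAt (fun w : ℝ × ℝ => phi k w.1 w.2) (a, s) := phi_contAt ha4
  have hc1 : ContinuousAt (fun t : ℝ => phi k a t) s := by
    have h2 := hc.comp (Continuous.continuousAt
      (by fun_prop : Continuous fun t : ℝ => ((a : ℝ), t)))
    exact h2
  rw [Metric.continuousAt_iff] at hc1
  obtain ⟨δ, hδ, hd⟩ := hc1 ε hε
  obtain ⟨j, m, hj⟩ := exists_approx hirr t₀ s δ hδ
  have h1 : (tauX ^ (-j)) q = phi k a (t₀ - (-j : ℤ) * α) := by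
    rw [ht₀]; exact tauX_zpow_phi ha4.le (-j) t₀
  have h2 : phi k a (t₀ - (-j : ℤ) * α) = phi k a (t₀ + ↑j * α + ↑m * (2 * π)) := by
    rw [show t₀ + ↑j * α + ↑m * (2 * π) = (t₀ - (-j : ℤ) * α) + ↑m * (2 * π) by
      push_cast; ring]
    exact (phi_period k a _ m).symm
  refine ⟨(tauX ^ (-j)) q, hX (-j) q hq, ?_⟩
  rw [h1, h2, hs]
  have hdd : dist (t₀ + ↑j * α + ↑m * (2 * π)) s < δ := by rwa [Real.dist_eq]
  have := hd hdd
  rw [dist_comm]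
  exact this

lemma caseR_x (hk₂ : k < 2) (hKcl : IsClosed K) (hKE : K ⊆ Ek k)
    (hX : ∀ (j : ℤ), ∀ q ∈ K, (tauX ^ j) q ∈ K)
    {q₀ : ℝ × ℝ × ℝ} (hq₀ : q₀ ∈ K)
    (hnear : ∀ δ > 0, ∃ q ∈ K, q.1 ≠ q₀.1 ∧ |q.1 - q₀.1| < δ) :
    ∀ p ∈ Ek k, p.1 = q₀.1 → p ∈ K := by
  set a := q₀.1 with ha
  set α := Real.arccos (a / 2) with hα
  by_cases hirr : Irrational (α / π)
  · exact caseI_x hk₂ hKcl hKE hX hq₀ hirr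
  · obtain ⟨r, hr⟩ := not_not.mp hirr
    intro p hp hp1
    have hqE := hKE hq₀
    have ha2 : a ^ 2 ≤ k + 2 := Ek_sq_le_fst hqE
    have ha4 : a ^ 2 < 4 := by nlinarith
    have haI : -2 ≤ a ∧ a ≤ 2 := by constructor <;> nlinarith
    obtain ⟨s, hs⟩ := phi_surj hk₂ hp
    rw [hp1] at hs
    set N : ℤ := 2 * r.den with hN
    set M : ℤ := r.num with hM
    have hden : (r.den : ℝ) ≠ 0 := by positivity
    have hrr : (r : ℝ) * π = α := by
      rw [hr]; field_simp
    have hNα : (N : ℝ) * α = (M : ℝ) * (2 * π) := by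
      rw [← hrr, hN, hM]
      push_cast
      have : ((r.den : ℝ)) * (r : ℝ) = (r.num : ℝ) := by
        exact_mod_cast congrArg (fun q : ℚ => (q : ℝ)) (Rat.den_mul_eq_num r)
      linear_combination (2*π) * this
    have hNpos : (0 : ℝ) < (N : ℝ) := by
      rw [hN]; push_cast; positivity
    rw [← hKcl.closure_eq, Metric.mem_closure_iff]
    intro ε hε
    have hc : ContinuousAt (fun w : ℝ × ℝ => phi k w.1 w.2) (a, s) := phi_contAt ha4
    rw [Metric.continuousAt_iff] at hc
    obtain ⟨δ₀, hδ₀, hd⟩ := hc ε hε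
    -- continuity of arccos(·/2) at a
    have hac : ContinuousAt (fun x : ℝ => Real.arccos (x / 2)) a := by
      apply Real.continuous_arccos.continuousAt.comp
      fun_prop
    rw [Metric.continuousAt_iff] at hac
    obtain ⟨δ₁, hδ₁, hd₁⟩ := hac (δ₀ / (2 * N)) (by positivity)
    obtain ⟨q, hqK, hqne, hqnear⟩ := hnear (min δ₀ δ₁) (lt_min hδ₀ hδ₁)
    have hqE2 := hKE hqK
    set aq := q.1 with haq
    have haq2 : aq ^ 2 ≤ k + 2 := Ek_sq_le_fst hqE2
    have haq4 : aq ^ 2 < 4 := by nlinarith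
    have haqI : -2 ≤ aq ∧ aq ≤ 2 := by constructor <;> nlinarith
    obtain ⟨tq, htq⟩ := phi_surj hk₂ hqE2
    set αq := Real.arccos (aq / 2) with hαq
    set e := αq - α with he
    have he0 : e ≠ 0 := by
      rw [he, sub_ne_zero]
      intro hcontra
      apply hqne
      have h1 : Real.cos αq = aq / 2 := cos_arccos_half haq4.le
      have h2 : Real.cos α = a / 2 := cos_arccos_half ha4.le
      rw [hcontra, h2] at h1
      linarith
    have heb : |e| < δ₀ / (2 * N) := by
      have := hd₁ (show dist aq a < δ₁ by
        rw [Real.dist_eq]; exact lt_of_lt_of_le hqnear (min_le_right _ _))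
      rwa [Real.dist_eq] at this
    set i : ℤ := round ((s - tq) / ((N : ℝ) * e)) with hi
    -- the approximating point
    have hpt : (tauX ^ (-(N * i))) q = phi k aq (tq + (N * i : ℤ) * αq) := by
      rw [htq]
      rw [tauX_zpow_phi haq4.le]
      congr 1
      push_cast
      ring
    have hper : phi k aq (tq + (N * i : ℤ) * αq) = phi k aq (tq + (N : ℝ) * i * e) := by
      have harg : tq + ((N * i : ℤ) : ℝ) * αq = (tq + (N : ℝ) * i * e) + (M * i : ℤ) * (2 * π) := by
        push_cast
        have : (N : ℝ) * αq = (N : ℝ) * α + (N : ℝ) * e := by rw [he]; ring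
        linear_combination (i:ℝ) * hNα + (i:ℝ) * this
      rw [harg, phi_period]
    have hwclose : |tq + (N : ℝ) * i * e - s| ≤ |(N : ℝ) * e| / 2 := by
      have hNe : (N : ℝ) * e ≠ 0 := mul_ne_zero (ne_of_gt hNpos) he0
      have hround := abs_sub_round ((s - tq) / ((N : ℝ) * e))
      have : tq + (N : ℝ) * i * e - s = -(((s - tq) / ((N : ℝ) * e) - i) * ((N : ℝ) * e)) := by
        field_simp
        ring
      rw [this, abs_neg, abs_mul]
      calc |(s - tq) / ((N : ℝ) * e) - ↑i| * |(N : ℝ) * e|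
          ≤ (1/2) * |(N : ℝ) * e| := by
            apply mul_le_mul_of_nonneg_right _ (abs_nonneg _)
            exact hround
        _ = |(N : ℝ) * e| / 2 := by ring
    have hwlt : |tq + (N : ℝ) * i * e - s| < δ₀ := by
      have h1 : |(N : ℝ) * e| = (N : ℝ) * |e| := by
        rw [abs_mul, abs_of_pos hNpos]
      have h2 : (N : ℝ) * |e| < (N : ℝ) * (δ₀ / (2 * N)) := by
        apply mul_lt_mul_of_pos_left heb hNpos
      have h3 : (N : ℝ) * (δ₀ / (2 * N)) = δ₀ / 2 := by field_simp
      calc |tq + (N : ℝ) * i * e - s| ≤ |(N : ℝ) * e| / 2 := hwclose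
        _ < δ₀ := by rw [h1]; nlinarith
    refine ⟨(tauX ^ (-(N * i))) q, hX _ q hqK, ?_⟩
    rw [hpt, hper, hs]
    have hdp : dist ((aq, tq + (N : ℝ) * i * e) : ℝ × ℝ) (a, s) < δ₀ := by
      rw [Prod.dist_eq]
      apply max_lt
      · rw [Real.dist_eq]; exact lt_of_lt_of_le hqnear (min_le_left _ _)
      · rw [Real.dist_eq]; exact hwlt
    have := hd hdp
    rw [dist_comm]
    exact this

end Circle


section Circle2

variable {k : ℝ} {K : Set (ℝ × ℝ × ℝ)}

lemma caseR_y (hk₂ : k < 2) (hKcl : IsClosed K) (hKE : K ⊆ Ek k)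
    (hY : ∀ (j : ℤ), ∀ q ∈ K, (tauY ^ j) q ∈ K)
    {q₀ : ℝ × ℝ × ℝ} (hq₀ : q₀ ∈ K)
    (hnear : ∀ δ > 0, ∃ q ∈ K, q.2.1 ≠ q₀.2.1 ∧ |q.2.1 - q₀.2.1| < δ) :
    ∀ p ∈ Ek k, p.2.1 = q₀.2.1 → p ∈ K := by
  set K' := swapXY '' K with hK'
  have hK'cl : IsClosed K' := isClosed_swapXY_image hKcl
  have hK'E : K' ⊆ Ek k := by
    rintro _ ⟨q, hq, rfl⟩
    exact swapXY_mem_Ek (hKE hq)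
  have hX' : ∀ (j : ℤ), ∀ q' ∈ K', (tauX ^ j) q' ∈ K' := by
    rintro j _ ⟨q, hq, rfl⟩
    rw [tauX_zpow_swapXY]
    exact ⟨_, hY j q hq, rfl⟩
  have hnear' : ∀ δ > 0, ∃ q' ∈ K', q'.1 ≠ (swapXY q₀).1 ∧ |q'.1 - (swapXY q₀).1| < δ := by
    intro δ hδ
    obtain ⟨q, hqK, h1, h2⟩ := hnear δ hδ
    exact ⟨swapXY q, ⟨q, hqK, rfl⟩, h1, h2⟩
  have h := caseR_x hk₂ hK'cl hK'E hX' (⟨q₀, hq₀, rfl⟩ : swapXY q₀ ∈ K') hnear'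
  intro p hp hp1
  have h2 := h (swapXY p) (swapXY_mem_Ek hp) hp1
  rw [hK', swapXY_image_mem, swapXY_swapXY] at h2
  exact h2

lemma rad_pos {k a : ℝ} (hm : 0 < k + 2 - a^2) (ha4 : a^2 < 4) : 0 < rad k a :=
  div_pos (Real.sqrt_pos.2 hm) (sn_pos ha4)

lemma sweep1 (hk₁ : -2 < k) (hk₂ : k < 2) (hKcl : IsClosed K) (hKE : K ⊆ Ek k)
    (hX : ∀ (j : ℤ), ∀ q ∈ K, (tauX ^ j) q ∈ K)
    {b₀ : ℝ} (hb₀ : b₀ ^ 2 < k + 2)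
    (hcirc : ∀ p ∈ Ek k, p.2.1 = b₀ → p ∈ K) :
    ∀ p ∈ Ek k, p.1 = 0 → p ∈ K := by
  have hb4 : b₀ ^ 2 < 4 := by nlinarith
  have hρ : 0 < rad k b₀ := rad_pos (by linarith) hb4
  set ρ := rad k b₀ with hρdef
  set qs := swapXY (phi k b₀ (π/2)) with hqs
  have hqsE : qs ∈ Ek k := swapXY_mem_Ek (phi_mem hk₁ hk₂ hb₀.le _)
  have hqs1 : qs.1 = 0 := by
    show ρ * Real.cos (π/2) = 0
    rw [Real.cos_pi_div_two, mul_zero]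
  have hqsK : qs ∈ K := hcirc qs hqsE rfl
  have hnear : ∀ δ > 0, ∃ q ∈ K, q.1 ≠ qs.1 ∧ |q.1 - qs.1| < δ := by
    intro δ hδ
    set u := min (δ/2) ρ with hu
    have hu0 : 0 < u := lt_min (by linarith) hρ
    have huρ : u ≤ ρ := min_le_right _ _
    have hcos : Real.cos (Real.arccos (u/ρ)) = u/ρ := by
      apply Real.cos_arccos
      · have : (0:ℝ) < u/ρ := by positivity
        linarith
      · rw [div_le_one hρ]; exact huρ
    set q := swapXY (phi k b₀ (Real.arccos (u/ρ))) with hq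
    have hqE : q ∈ Ek k := swapXY_mem_Ek (phi_mem hk₁ hk₂ hb₀.le _)
    have hq1 : q.1 = u := by
      show ρ * Real.cos (Real.arccos (u/ρ)) = u
      rw [hcos]
      field_simp
    refine ⟨q, hcirc q hqE rfl, ?_, ?_⟩
    · rw [hq1, hqs1]; exact ne_of_gt hu0
    · rw [hq1, hqs1, sub_zero, abs_of_pos hu0]
      calc u ≤ δ/2 := min_le_left _ _
        _ < δ := by linarith
  intro p hp hp1
  exact caseR_x hk₂ hKcl hKE hX hqsK hnear p hp (by rw [hp1, hqs1])

lemma sweep2 (hk₁ : -2 < k) (hk₂ : k < 2) (hKcl : IsClosed K) (hKE : K ⊆ Ek k)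
    (hY : ∀ (j : ℤ), ∀ q ∈ K, (tauY ^ j) q ∈ K)
    (hcirc0 : ∀ p ∈ Ek k, p.1 = 0 → p ∈ K) :
    Ek k ⊆ K := by
  intro p hp
  set b := p.2.1 with hb
  have hb2 : b ^ 2 ≤ k + 2 := Ek_sq_le_snd hp
  set c := Real.sqrt (k + 2) with hc
  have hc0 : 0 < c := Real.sqrt_pos.2 (by linarith)
  have hc2 : c ^ 2 = k + 2 := Real.sq_sqrt (by linarith)
  have hbc : |b| ≤ c := by
    rw [abs_le]; constructor <;> nlinarith
  -- the point on the x = 0 circle with y-coordinate w, for any w^2 ≤ k+2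
  have hmemw : ∀ w : ℝ, w ^ 2 ≤ k + 2 → (0, w, Real.sqrt (k + 2 - w^2)) ∈ Ek k := by
    intro w hw
    have hz2 : Real.sqrt (k + 2 - w^2) ^ 2 = k + 2 - w^2 := Real.sq_sqrt (by linarith)
    have hz0 : 0 ≤ Real.sqrt (k + 2 - w^2) := Real.sqrt_nonneg _
    rw [mem_Ek_iff]
    refine ⟨⟨by norm_num, by norm_num⟩, ⟨?_, ?_⟩, ⟨?_, ?_⟩, ?_⟩
    · nlinarith
    · nlinarith
    · nlinarith
    · nlinarith
    · rw [hz2]; ring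
  set qs := ((0:ℝ), b, Real.sqrt (k + 2 - b^2)) with hqs
  have hqsE : qs ∈ Ek k := hmemw b hb2
  have hqsK : qs ∈ K := hcirc0 qs hqsE rfl
  have hnear : ∀ δ > 0, ∃ q ∈ K, q.2.1 ≠ qs.2.1 ∧ |q.2.1 - qs.2.1| < δ := by
    intro δ hδ
    have hqs21 : qs.2.1 = b := rfl
    by_cases hb0 : b = 0
    · set w := min (δ/2) c with hw
      have hw0 : 0 < w := lt_min (by linarith) hc0
      have hwc : w ≤ c := min_le_right _ _
      have hw2 : w ^ 2 ≤ k + 2 := by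
        nlinarith [mul_nonneg (sub_nonneg.2 hwc) (by positivity : (0:ℝ) ≤ c + w)]
      refine ⟨((0:ℝ), w, Real.sqrt (k + 2 - w^2)), hcirc0 _ (hmemw w hw2) rfl, ?_, ?_⟩
      · show w ≠ qs.2.1
        rw [hqs21, hb0]; exact ne_of_gt hw0
      · show |w - qs.2.1| < δ
        rw [hqs21, hb0, sub_zero, abs_of_pos hw0]
        calc w ≤ δ/2 := min_le_left _ _
          _ < δ := by linarith
    · set θ := min (δ/(2*c)) 1 with hθ
      have hθ0 : 0 < θ := lt_min (by positivity) one_pos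
      have hθ1 : θ ≤ 1 := min_le_right _ _
      set w := b * (1 - θ) with hw
      have hw2 : w ^ 2 ≤ k + 2 := by
        rw [hw]
        nlinarith [mul_nonneg (sq_nonneg b) (by nlinarith : (0:ℝ) ≤ θ*(2-θ))]
      refine ⟨((0:ℝ), w, Real.sqrt (k + 2 - w^2)), hcirc0 _ (hmemw w hw2) rfl, ?_, ?_⟩
      · show w ≠ qs.2.1
        rw [hqs21, hw]
        intro hcon
        have : b * θ = 0 := by linarith [hcon]
        rcases mul_eq_zero.mp this with h | h
        · exact hb0 h
        · exact absurd h (ne_of_gt hθ0)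
      · show |w - qs.2.1| < δ
        rw [hqs21, hw]
        have : b * (1 - θ) - b = -(b * θ) := by ring
        rw [this, abs_neg, abs_mul]
        have h1 : |θ| = θ := abs_of_pos hθ0
        have h2 : θ ≤ δ/(2*c) := min_le_left _ _
        rw [h1]
        calc |b| * θ ≤ c * θ := by
              apply mul_le_mul_of_nonneg_right hbc hθ0.le
          _ ≤ c * (δ/(2*c)) := by
              apply mul_le_mul_of_nonneg_left h2 hc0.le
          _ = δ/2 := by field_simp
          _ < δ := by linarith
  have h := caseR_y hk₂ hKcl hKE hY hqsK hnear
  exact h p hp rfl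

end Circle2


lemma fiber_finite {k : ℝ} (O : Set (ℝ × ℝ × ℝ)) (hOE : O ⊆ Ek k) (c : ℝ × ℝ) :
    {p ∈ O | (p.1, p.2.1) = c}.Finite := by
  by_cases hne : {p ∈ O | (p.1, p.2.1) = c}.Nonempty
  · obtain ⟨p₁, hp₁O, hp₁c⟩ := hne
    apply Set.Finite.subset
      ((Set.finite_singleton ((c.1, c.2, c.1 * c.2 - p₁.2.2) : ℝ × ℝ × ℝ)).insert p₁)
    rintro p ⟨hpO, hpc⟩
    have h1 : p.1 = c.1 := by rw [← hpc]
    have h2 : p.2.1 = c.2 := by rw [← hpc]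
    have h3 : p₁.1 = c.1 := by rw [← hp₁c]
    have h4 : p₁.2.1 = c.2 := by rw [← hp₁c]
    have hκp : kappa p = k := (hOE hpO).2.2.2
    have hκp₁ : kappa p₁ = k := (hOE hp₁O).2.2.2
    unfold kappa at hκp hκp₁
    have key : (p.2.2 - p₁.2.2) * (p.2.2 + p₁.2.2 - c.1 * c.2) = 0 := by
      rw [h1, h2] at hκp
      rw [h3, h4] at hκp₁
      linear_combination hκp - hκp₁
    rw [Set.mem_insert_iff, Set.mem_singleton_iff]
    rcases mul_eq_zero.mp key with h | h
    · left
      have hz : p.2.2 = p₁.2.2 := by linarith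
      exact Prod.ext (h1.trans h3.symm) (Prod.ext (h2.trans h4.symm) hz)
    · right
      have hz : p.2.2 = c.1 * c.2 - p₁.2.2 := by linarith
      exact Prod.ext h1 (Prod.ext h2 hz)
  · rw [Set.not_nonempty_iff_eq_empty] at hne
    rw [hne]
    exact Set.finite_empty

lemma proj_infinite {k : ℝ} {O : Set (ℝ × ℝ × ℝ)} (hOE : O ⊆ Ek k) (hinf : O.Infinite) :
    (Prod.fst '' O).Infinite ∨ ((fun p : ℝ × ℝ × ℝ => p.2.1) '' O).Infinite := by
  by_contra h
  push_neg at h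
  obtain ⟨h1, h2⟩ := h
  apply hinf
  have himg : ((fun p : ℝ × ℝ × ℝ => (p.1, p.2.1)) '' O).Finite := by
    apply Set.Finite.subset (h1.prod h2)
    rintro _ ⟨p, hp, rfl⟩
    exact ⟨⟨p, hp, rfl⟩, ⟨p, hp, rfl⟩⟩
  have hsub : O ⊆ ⋃ c ∈ ((fun p : ℝ × ℝ × ℝ => (p.1, p.2.1)) '' O), {p ∈ O | (p.1, p.2.1) = c} := by
    intro p hp
    exact Set.mem_biUnion ⟨p, hp, rfl⟩ ⟨hp, rfl⟩
  exact Set.Finite.subset (Set.Finite.biUnion himg (fun c _ => fiber_finite O hOE c)) hsub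

lemma step3x {k : ℝ} {K O : Set (ℝ × ℝ × ℝ)} (hk₁ : -2 < k) (hk₂ : k < 2)
    (hOK : O ⊆ K) (hOE : O ⊆ Ek k)
    (hKcl : IsClosed K) (hKE : K ⊆ Ek k)
    (hX : ∀ (j : ℤ), ∀ q ∈ K, (tauX ^ j) q ∈ K)
    (hY : ∀ (j : ℤ), ∀ q ∈ K, (tauY ^ j) q ∈ K)
    (hinfx : (Prod.fst '' O).Infinite) :
    ∃ a : ℝ, a ^ 2 < k + 2 ∧
      ((∀ p ∈ Ek k, p.1 = a → p ∈ K) ∨ (∀ p ∈ Ek k, p.2.1 = a → p ∈ K)) := by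
  classical
  set f := hinfx.natEmbedding with hf
  have hchoice : ∀ n : ℕ, ∃ p, p ∈ O ∧ p.1 = (f n : ℝ) := by
    intro n
    obtain ⟨p, hp, he⟩ := (f n).2
    exact ⟨p, hp, he⟩
  choose u hu1 hu2 using hchoice
  have huinj : Function.Injective fun n => (u n).1 := by
    intro a b h
    simp only [hu2] at h
    exact f.injective (Subtype.ext h)
  have hKcpt : IsCompact K := isCompact_Ek.of_isClosed_subset hKcl hKE
  obtain ⟨qs, hqsK, φ, hφ, hconv⟩ := hKcpt.tendsto_subseq (fun n => hOK (hu1 n))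
  set v := u ∘ φ with hv
  have hvO : ∀ n, v n ∈ O := fun n => hu1 (φ n)
  have hvK : ∀ n, v n ∈ K := fun n => hOK (hvO n)
  have hvinj : Function.Injective fun n => (v n).1 := by
    intro a b h
    exact hφ.injective (huinj h)
  have hv1 : Filter.Tendsto (fun n => (v n).1) Filter.atTop (nhds qs.1) :=
    ((continuous_fst.tendsto qs).comp hconv)
  have hv2 : Filter.Tendsto (fun n => (v n).2.1) Filter.atTop (nhds qs.2.1) :=
    (((by fun_prop : Continuous fun p : ℝ × ℝ × ℝ => p.2.1).tendsto qs).comp hconv)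
  have hv3 : Filter.Tendsto (fun n => (v n).2.2) Filter.atTop (nhds qs.2.2) :=
    (((by fun_prop : Continuous fun p : ℝ × ℝ × ℝ => p.2.2).tendsto qs).comp hconv)
  have hqsE : qs ∈ Ek k := hKE hqsK
  have ha2 : qs.1 ^ 2 ≤ k + 2 := Ek_sq_le_fst hqsE
  rcases lt_or_eq_of_le ha2 with hlt | heq
  · -- nondegenerate: direct caseR_x at qs
    refine ⟨qs.1, hlt, Or.inl ?_⟩
    apply caseR_x hk₂ hKcl hKE hX hqsK
    intro δ hδ
    rw [Metric.tendsto_atTop] at hv1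
    obtain ⟨N, hN⟩ := hv1 δ hδ
    have hne : (v N).1 ≠ qs.1 ∨ (v (N+1)).1 ≠ qs.1 := by
      by_contra hcon
      push_neg at hcon
      have := hvinj (hcon.1.trans hcon.2.symm)
      omega
    rcases hne with h | h
    · exact ⟨v N, hvK N, h, by have := hN N le_rfl; rwa [Real.dist_eq] at this⟩
    · exact ⟨v (N+1), hvK (N+1), h, by
        have := hN (N+1) (by omega); rwa [Real.dist_eq] at this⟩
  · -- degenerate: qs = (a*, 0, 0)
    obtain ⟨hb1, hb2, hb3, hκ⟩ := hqsE
    unfold kappa at hκ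
    have hx4 : qs.1 ^ 2 < 4 := by nlinarith
    have hy0 : qs.2.1 = 0 := by
      have hy2 : qs.2.1 ^ 2 ≤ 0 := by
        nlinarith [sq_nonneg (2 * qs.2.2 - qs.1 * qs.2.1)]
      exact pow_eq_zero_iff (n := 2) (by norm_num) |>.mp (le_antisymm hy2 (sq_nonneg _))
    have hz0 : qs.2.2 = 0 := by
      have hκ' : qs.1 ^ 2 + qs.2.2 ^ 2 - 2 = k := by
        rw [hy0] at hκ
        linear_combination hκ
      have hz2 : qs.2.2 ^ 2 ≤ 0 := by linarith
      exact pow_eq_zero_iff (n := 2) (by norm_num) |>.mp (le_antisymm hz2 (sq_nonneg _))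
    set rs := tauY qs with hrs
    have hrsK : rs ∈ K := by
      have := hY 1 qs hqsK
      rwa [zpow_one] at this
    have hrs1 : rs.1 = 0 := by rw [hrs, tauY_apply]; exact hz0
    have hrs2 : rs.2.1 = 0 := by rw [hrs, tauY_apply]; exact hy0
    -- T cofinite
    have hTsub : {n : ℕ | (v n).1 = qs.1 ∨ (v n).1 = -qs.1}.Finite := by
      apply Set.Finite.subset (Set.Finite.union
        (Set.finite_singleton (Function.invFun (fun n => (v n).1) qs.1))
        (Set.finite_singleton (Function.invFun (fun n => (v n).1) (-qs.1))))
      rintro n (h | h)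
      · rw [Set.mem_union, Set.mem_singleton_iff, Set.mem_singleton_iff]
        left
        rw [← h]
        exact (Function.leftInverse_invFun hvinj n).symm
      · rw [Set.mem_union, Set.mem_singleton_iff, Set.mem_singleton_iff]
        right
        rw [← h]
        exact (Function.leftInverse_invFun hvinj n).symm
    have hT : {n : ℕ | (v n).1 ≠ qs.1 ∧ (v n).1 ≠ -qs.1}.Infinite := by
      have := hTsub.infinite_compl
      apply Set.Infinite.mono _ this
      intro n hn
      simp only [Set.mem_compl_iff, Set.mem_setOf_eq, not_or] at hn
      exact hn
    -- on T, y or z nonzero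
    have hyz : ∀ n ∈ {n : ℕ | (v n).1 ≠ qs.1 ∧ (v n).1 ≠ -qs.1},
        (v n).2.1 ≠ 0 ∨ (v n).2.2 ≠ 0 := by
      intro n hn
      by_contra hcon
      push_neg at hcon
      obtain ⟨hy, hz⟩ := hcon
      have hvE := hOE (hvO n)
      have hκv : kappa (v n) = k := hvE.2.2.2
      unfold kappa at hκv
      rw [hy, hz] at hκv
      have : ((v n).1 - qs.1) * ((v n).1 + qs.1) = 0 := by linear_combination hκv - heq
      rcases mul_eq_zero.mp this with h | h
      · exact hn.1 (by linarith)
      · exact hn.2 (by linarith)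
    have hsplit : {n : ℕ | (v n).1 ≠ qs.1 ∧ (v n).1 ≠ -qs.1} ⊆
        {n : ℕ | (v n).2.2 ≠ 0} ∪ {n : ℕ | (v n).2.1 ≠ 0} := by
      intro n hn
      rcases hyz n hn with h | h
      · right; exact h
      · left; exact h
    have hun : ({n : ℕ | (v n).2.2 ≠ 0} ∪ {n : ℕ | (v n).2.1 ≠ 0}).Infinite :=
      hT.mono hsplit
    rw [Set.infinite_union] at hun
    refine ⟨0, by nlinarith, ?_⟩
    rcases hun with hS | hS
    · -- z nonzero infinitely often: x-circle at 0
      left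
      have h := caseR_x hk₂ hKcl hKE hX hrsK ?_
      · intro p hp hp1
        exact h p hp (by rw [hp1, hrs1])
      · intro δ hδ
        rw [hz0, Metric.tendsto_atTop] at hv3
        obtain ⟨N, hN⟩ := hv3 δ hδ
        obtain ⟨n, hnS, hnN⟩ := hS.exists_gt N
        refine ⟨tauY (v n), by
          have := hY 1 (v n) (hvK n); rwa [zpow_one] at this, ?_, ?_⟩
        · rw [tauY_apply, hrs1]
          exact hnS
        · rw [tauY_apply, hrs1, sub_zero]
          have := hN n hnN.le
          rwa [Real.dist_eq, sub_zero] at this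
    · -- y nonzero infinitely often: y-circle at 0
      right
      have h := caseR_y hk₂ hKcl hKE hY hrsK ?_
      · intro p hp hp1
        exact h p hp (by rw [hp1, hrs2])
      · intro δ hδ
        rw [hy0, Metric.tendsto_atTop] at hv2
        obtain ⟨N, hN⟩ := hv2 δ hδ
        obtain ⟨n, hnS, hnN⟩ := hS.exists_gt N
        refine ⟨tauY (v n), by
          have := hY 1 (v n) (hvK n); rwa [zpow_one] at this, ?_, ?_⟩
        · rw [tauY_apply, hrs2]
          exact hnS
        · rw [tauY_apply, hrs2, sub_zero]
          have := hN n hnN.le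
          rwa [Real.dist_eq, sub_zero] at this


section Finish

variable {k : ℝ} {K : Set (ℝ × ℝ × ℝ)}

lemma swap_hX (hY : ∀ (j : ℤ), ∀ q ∈ K, (tauY ^ j) q ∈ K) :
    ∀ (j : ℤ), ∀ q' ∈ swapXY '' K, (tauX ^ j) q' ∈ swapXY '' K := by
  rintro j _ ⟨q, hq, rfl⟩
  rw [tauX_zpow_swapXY]
  exact ⟨_, hY j q hq, rfl⟩

lemma swap_hY (hX : ∀ (j : ℤ), ∀ q ∈ K, (tauX ^ j) q ∈ K) :
    ∀ (j : ℤ), ∀ q' ∈ swapXY '' K, (tauY ^ j) q' ∈ swapXY '' K := by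
  rintro j _ ⟨q, hq, rfl⟩
  rw [tauY_zpow_swapXY]
  exact ⟨_, hX j q hq, rfl⟩

lemma swap_hKE (hKE : K ⊆ Ek k) : swapXY '' K ⊆ Ek k := by
  rintro _ ⟨q, hq, rfl⟩
  exact swapXY_mem_Ek (hKE hq)

lemma finish_lemma (hk₁ : -2 < k) (hk₂ : k < 2) (hKcl : IsClosed K) (hKE : K ⊆ Ek k)
    (hX : ∀ (j : ℤ), ∀ q ∈ K, (tauX ^ j) q ∈ K)
    (hY : ∀ (j : ℤ), ∀ q ∈ K, (tauY ^ j) q ∈ K)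
    (h : ∃ a : ℝ, a ^ 2 < k + 2 ∧
      ((∀ p ∈ Ek k, p.1 = a → p ∈ K) ∨ (∀ p ∈ Ek k, p.2.1 = a → p ∈ K))) :
    Ek k ⊆ K := by
  obtain ⟨a, ha, hcirc | hcirc⟩ := h
  · -- x-circle at a in K : work in the swapped world
    set K' := swapXY '' K with hK'
    have hK'cl : IsClosed K' := isClosed_swapXY_image hKcl
    have hK'E : K' ⊆ Ek k := swap_hKE hKE
    have hX' := swap_hX hY
    have hY' := swap_hY hX
    have hcirc' : ∀ p ∈ Ek k, p.2.1 = a → p ∈ K' := by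
      intro p hp hp1
      rw [hK', swapXY_image_mem]
      exact hcirc (swapXY p) (swapXY_mem_Ek hp) hp1
    have hEk' : Ek k ⊆ K' :=
      sweep2 hk₁ hk₂ hK'cl hK'E hY' (sweep1 hk₁ hk₂ hK'cl hK'E hX' ha hcirc')
    intro p hp
    have := hEk' (swapXY_mem_Ek hp)
    rw [hK', swapXY_image_mem, swapXY_swapXY] at this
    exact this
  · exact sweep2 hk₁ hk₂ hKcl hKE hY (sweep1 hk₁ hk₂ hKcl hKE hX ha hcirc)

end Finish

/-- If `(x₀,y₀,z₀) ∈ E_k` (`−2 < k < 2`) has infinite `Γ`-orbit, then its `Γ`-orbit is dense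
in `E_k`. -/
theorem infinite_orbit_dense (k : ℝ) (hk₁ : -2 < k) (hk₂ : k < 2)
    (x₀ y₀ z₀ : ℝ) (hmem : (x₀, y₀, z₀) ∈ Ek k)
    (hinf : (gammaOrbit (x₀, y₀, z₀)).Infinite) :
    Ek k ⊆ closure (gammaOrbit (x₀, y₀, z₀)) := by
  set O := gammaOrbit (x₀, y₀, z₀) with hO
  set K := closure O with hK
  have hOE : O ⊆ Ek k := gammaOrbit_subset_Ek hk₂ hmem
  have hKcl : IsClosed K := isClosed_closure
  have hKE : K ⊆ Ek k := closure_minimal hOE isClosed_Ek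
  have hOK : O ⊆ K := subset_closure
  have htauXmem : tauX ∈ _root_.Gamma := Subgroup.subset_closure (Set.mem_insert _ _)
  have htauYmem : tauY ∈ _root_.Gamma := Subgroup.subset_closure
    (Set.mem_insert_of_mem _ rfl)
  have hX : ∀ (j : ℤ), ∀ q ∈ K, (tauX ^ j) q ∈ K := fun j q hq =>
    smul_mem_orbit_closure (Subgroup.zpow_mem _ htauXmem j) hq
  have hY : ∀ (j : ℤ), ∀ q ∈ K, (tauY ^ j) q ∈ K := fun j q hq =>
    smul_mem_orbit_closure (Subgroup.zpow_mem _ htauYmem j) hq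
  rcases proj_infinite hOE hinf with hx | hy
  · exact finish_lemma hk₁ hk₂ hKcl hKE hX hY
      (step3x hk₁ hk₂ hOK hOE hKcl hKE hX hY hx)
  · -- swapped world
    set O' := swapXY '' O with hO'
    set K' := swapXY '' K with hK'
    have hO'K' : O' ⊆ K' := Set.image_mono hOK
    have hO'E : O' ⊆ Ek k := swap_hKE hOE
    have hK'cl : IsClosed K' := isClosed_swapXY_image hKcl
    have hK'E : K' ⊆ Ek k := swap_hKE hKE
    have hX' := swap_hX hY
    have hY' := swap_hY hX
    have hinfx' : (Prod.fst '' O').Infinite := by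
      have him : Prod.fst '' O' = (fun p : ℝ × ℝ × ℝ => p.2.1) '' O := by
        rw [hO', Set.image_image]
        rfl
      rwa [him]
    have hEk' : Ek k ⊆ K' := finish_lemma hk₁ hk₂ hK'cl hK'E hX' hY'
      (step3x hk₁ hk₂ hO'K' hO'E hK'cl hK'E hX' hY' hinfx')
    intro p hp
    have := hEk' (swapXY_mem_Ek hp)
    rw [hK', swapXY_image_mem, swapXY_swapXY] at this
    exact this
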